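/- Let μ > 0 and λ ∈ (0,1), and suppose g : ℝ≥0 → ℝ≥0 satisfies g(t) ≤ ∫₀^{t^{1-λ}} c·e^{(μ/(1-λ))(s - t^{1-λ})} · s^{-λ/(1-λ)} ds for large t and some c > 0. Then g(t) = O(1/t^λ). -/

import Mathlib

open Real Filter Set intervalIntegral MeasureTheory

lemma exp_int_le {ν a b : ℝ} (hν : 0 < ν) : ∫ s in a..b, Real.exp (ν * (s - b)) ≤ 1 / ν := by
  have key : ∫ s in a..b, Real.exp (ν * (s - b))
      = Real.exp (ν * (b - b)) / ν - Real.exp (ν * (a - b)) / ν := by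
    apply intervalIntegral.integral_eq_sub_of_hasDerivAt (f := fun s => Real.exp (ν * (s - b)) / ν)
    · intro x hx
      have h1 : HasDerivAt (fun s : ℝ => ν * (s - b)) ν x := by
        simpa using ((hasDerivAt_id x).sub_const b).const_mul ν
      have := (h1.exp).div_const ν
      simpa [mul_div_assoc, div_self hν.ne'] using this
    · exact (by continuity : Continuous fun s : ℝ => Real.exp (ν * (s - b))).intervalIntegrable _ _
  rw [key, sub_self, mul_zero, Real.exp_zero]
  have := (Real.exp_pos (ν * (a - b))).le
  have h2 : 0 ≤ Real.exp (ν * (a - b)) / ν := by positivity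
  linarith

lemma integral_bound (ν k c : ℝ) (hν : 0 < ν) (hk : 0 < k) (hk1 : k < 1) (hc : 0 < c) :
    ∀ᶠ T in atTop, ∫ s in (0:ℝ)..T, c * Real.exp (ν * (s - T)) * s ^ (-k)
      ≤ (c + c / (2 ^ (-k) * ν)) * T ^ (-k) := by
  have hdecay : Tendsto (fun T : ℝ => T ^ 2 * Real.exp (-(ν * T / 2))) atTop (nhds 0) := by
    have h1 := tendsto_pow_mul_exp_neg_atTop_nhds_zero 2
    have h2 : Tendsto (fun T : ℝ => ν / 2 * T) atTop atTop :=
      Tendsto.const_mul_atTop (by positivity) tendsto_id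
    have h3 := (h1.comp h2).const_mul ((2 / ν) ^ 2)
    rw [mul_zero] at h3
    refine h3.congr' ?_
    filter_upwards [eventually_ge_atTop (0:ℝ)] with T hT
    have : -(ν / 2 * T) = -(ν * T / 2) := by ring
    simp only [Function.comp_apply, this]
    have h4 : (2 / ν) * (ν / 2) = 1 := by
      rw [div_mul_div_comm, mul_comm 2 ν, div_self (by positivity)]
    calc (2 / ν) ^ 2 * ((ν / 2 * T) ^ 2 * Real.exp (-(ν * T / 2)))
        = ((2 / ν) * (ν / 2)) ^ 2 * (T ^ 2 * Real.exp (-(ν * T / 2))) := by ring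
      _ = T ^ 2 * Real.exp (-(ν * T / 2)) := by rw [h4]; ring
  filter_upwards [eventually_ge_atTop (1:ℝ),
      hdecay.eventually_lt_const (by linarith : (0:ℝ) < 1 - k)] with T hT1 hT2
  have hT0 : (0:ℝ) < T := by linarith
  have hT2' : T ^ 2 * Real.exp (-(ν * T / 2)) ≤ 1 - k := hT2.le
  have hcont : Continuous fun s : ℝ => Real.exp (ν * (s - T)) :=
    Real.continuous_exp.comp (continuous_const.mul (continuous_id.sub continuous_const))
  have hfint : ∀ a b : ℝ, IntervalIntegrable
      (fun s => c * Real.exp (ν * (s - T)) * s ^ (-k)) volume a b := by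
    intro a b
    exact (intervalIntegrable_rpow' (by linarith)).continuousOn_mul
      (continuous_const.mul hcont).continuousOn
  have hsplit := intervalIntegral.integral_add_adjacent_intervals
    (hfint 0 (T / 2)) (hfint (T / 2) T)
  rw [← hsplit]
  -- piece 1
  have p1 : ∫ s in (0:ℝ)..(T / 2), c * Real.exp (ν * (s - T)) * s ^ (-k)
      ≤ ∫ s in (0:ℝ)..(T / 2), c * Real.exp (-(ν * T / 2)) * s ^ (-k) := by
    apply intervalIntegral.integral_mono_on (by linarith) (hfint _ _)
    · exact (intervalIntegrable_rpow' (by linarith)).continuousOn_mul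
        continuous_const.continuousOn
    · intro s hs
      have h1 : Real.exp (ν * (s - T)) ≤ Real.exp (-(ν * T / 2)) := by
        apply Real.exp_le_exp.2; nlinarith [hs.2]
      have h2 : (0:ℝ) ≤ s ^ (-k) := Real.rpow_nonneg hs.1 _
      have := mul_le_mul_of_nonneg_right (mul_le_mul_of_nonneg_left h1 hc.le) h2
      linarith
  have p1' : ∫ s in (0:ℝ)..(T / 2), c * Real.exp (-(ν * T / 2)) * s ^ (-k)
      = c * Real.exp (-(ν * T / 2)) * ((T / 2) ^ (-k + 1) / (-k + 1)) := by
    rw [intervalIntegral.integral_const_mul, integral_rpow (Or.inl (by linarith)),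
      Real.zero_rpow (by linarith : (0:ℝ) < -k + 1).ne']
    ring
  have p1'' : c * Real.exp (-(ν * T / 2)) * ((T / 2) ^ (-k + 1) / (-k + 1)) ≤ c * T ^ (-k) := by
    have e1 : (T / 2) ^ (-k + 1) ≤ T ^ (-k + 1) :=
      Real.rpow_le_rpow (by positivity) (by linarith) (by linarith)
    have e2 : T ^ (-k + 1) ≤ T := by
      calc T ^ (-k + 1) ≤ T ^ (1:ℝ) := Real.rpow_le_rpow_of_exponent_le hT1 (by linarith)
        _ = T := Real.rpow_one T
    have e3 : T ^ (-(1:ℝ)) ≤ T ^ (-k) := Real.rpow_le_rpow_of_exponent_le hT1 (by linarith)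
    have e4 : Real.exp (-(ν * T / 2)) * (T / 2) ^ (-k + 1) / (-k + 1) ≤ T ^ (-(1:ℝ)) := by
      rw [Real.rpow_neg_one, div_le_iff₀ (by linarith : (0:ℝ) < -k + 1)]
      have hep := (Real.exp_pos (-(ν * T / 2))).le
      have h5 : Real.exp (-(ν * T / 2)) * (T / 2) ^ (-k + 1) ≤ Real.exp (-(ν * T / 2)) * T :=
        by nlinarith
      have h6 : Real.exp (-(ν * T / 2)) * T * T ≤ (1 - k) := by nlinarith [sq_nonneg T]
      have h7 : (0:ℝ) < T⁻¹ := by positivity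
      calc Real.exp (-(ν * T / 2)) * (T / 2) ^ (-k + 1) ≤ Real.exp (-(ν * T / 2)) * T := h5
        _ = Real.exp (-(ν * T / 2)) * T * T * T⁻¹ := by field_simp
        _ ≤ (1 - k) * T⁻¹ := mul_le_mul_of_nonneg_right h6 h7.le
        _ = T⁻¹ * (-k + 1) := by ring
    calc c * Real.exp (-(ν * T / 2)) * ((T / 2) ^ (-k + 1) / (-k + 1))
        = c * (Real.exp (-(ν * T / 2)) * (T / 2) ^ (-k + 1) / (-k + 1)) := by ring
      _ ≤ c * T ^ (-(1:ℝ)) := by nlinarith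
      _ ≤ c * T ^ (-k) := by nlinarith [Real.rpow_nonneg hT0.le (-(1:ℝ))]
  -- piece 2
  have hTk : (0:ℝ) < (T / 2) ^ (-k) := Real.rpow_pos_of_pos (by linarith) _
  have p2 : ∫ s in (T / 2)..T, c * Real.exp (ν * (s - T)) * s ^ (-k)
      ≤ ∫ s in (T / 2)..T, c * (T / 2) ^ (-k) * Real.exp (ν * (s - T)) := by
    apply intervalIntegral.integral_mono_on (by linarith) (hfint _ _)
    · exact (continuous_const.mul hcont).intervalIntegrable _ _
    · intro s hs
      have h1 : s ^ (-k) ≤ (T / 2) ^ (-k) :=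
        Real.rpow_le_rpow_of_nonpos (by linarith) hs.1 (by linarith)
      have h2 := (Real.exp_pos (ν * (s - T))).le
      have := mul_le_mul_of_nonneg_left h1 (mul_nonneg hc.le h2)
      linarith
  have p2' : ∫ s in (T / 2)..T, c * (T / 2) ^ (-k) * Real.exp (ν * (s - T))
      ≤ c * (T / 2) ^ (-k) * (1 / ν) := by
    rw [intervalIntegral.integral_const_mul]
    exact mul_le_mul_of_nonneg_left (exp_int_le hν) (by positivity)
  have hdiv : (T / 2) ^ (-k) = T ^ (-k) / 2 ^ (-k) :=
    Real.div_rpow hT0.le (by norm_num) _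
  have h2k : (0:ℝ) < 2 ^ (-k) := Real.rpow_pos_of_pos (by norm_num) _
  have final : c * (T / 2) ^ (-k) * (1 / ν) = c / (2 ^ (-k) * ν) * T ^ (-k) := by
    rw [hdiv]; field_simp
  calc (∫ s in (0:ℝ)..(T / 2), c * Real.exp (ν * (s - T)) * s ^ (-k))
        + ∫ s in (T / 2)..T, c * Real.exp (ν * (s - T)) * s ^ (-k)
      ≤ c * T ^ (-k) + c / (2 ^ (-k) * ν) * T ^ (-k) := by
        rw [← final]
        have := p1.trans (le_of_eq p1')
        linarith [this.trans p1'', p2.trans p2']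
    _ = (c + c / (2 ^ (-k) * ν)) * T ^ (-k) := by ring

/-- Change-of-variables estimate: if
`g t ≤ ∫₀^{t^{1-λ}} c e^{(μ/(1-λ))(s - t^{1-λ})} s^{-λ/(1-λ)} ds` for large `t`,
then `g(t) = O(1/t^λ)`. -/
theorem change_of_variables_rate
    (μ lam : ℝ) (hμ : 0 < μ) (hlam : lam ∈ Set.Ioo (0:ℝ) 1)
    (g : ℝ → ℝ) (hg : ∀ t ≥ (0:ℝ), 0 ≤ g t)
    (c : ℝ) (hc : 0 < c)
    (hbound : ∀ᶠ t in atTop,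
      g t ≤ ∫ s in (0:ℝ)..(t ^ (1 - lam)),
        c * Real.exp ((μ / (1 - lam)) * (s - t ^ (1 - lam))) *
          s ^ (-(lam / (1 - lam)))) :
    ∃ c' > (0:ℝ), ∃ τ > (0:ℝ), ∀ t ≥ τ, g t ≤ c' / t ^ lam := by
  obtain ⟨hlam0, hlam1⟩ := hlam
  have h1l : (0:ℝ) < 1 - lam := by linarith
  set ν : ℝ := μ / (1 - lam) with hνdef
  set k : ℝ := lam / (1 - lam) with hkdef
  have hν : 0 < ν := by positivity
  have hk : 0 < k := by positivity
  have hexp : (1 - lam) * (-k) = -lam := by rw [hkdef]; field_simp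
  rcases lt_or_ge k 1 with hk1 | hk1
  · -- integrable case
    have hT : Tendsto (fun t : ℝ => t ^ (1 - lam)) atTop atTop :=
      tendsto_rpow_atTop h1l
    have hev := hT.eventually (integral_bound ν k c hν hk hk1 hc)
    set K : ℝ := c + c / (2 ^ (-k) * ν) with hK
    have hKpos : 0 < K := by
      have : (0:ℝ) < 2 ^ (-k) := Real.rpow_pos_of_pos (by norm_num) _
      positivity
    have hall : ∀ᶠ t in atTop, g t ≤ K / t ^ lam := by
      filter_upwards [hbound, hev, eventually_ge_atTop (1:ℝ)] with t hb he ht1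
      have ht0 : (0:ℝ) < t := by linarith
      have heq : (t ^ (1 - lam)) ^ (-k) = t ^ (-lam) := by
        rw [← Real.rpow_mul ht0.le, hexp]
      have hfin : K * (t ^ (1 - lam)) ^ (-k) = K / t ^ lam := by
        rw [heq, Real.rpow_neg ht0.le, div_eq_mul_inv]
      linarith [hb.trans (he.trans_eq hfin)]
    obtain ⟨τ₀, hτ₀⟩ := eventually_atTop.1 hall
    refine ⟨K, hKpos, max τ₀ 1, lt_of_lt_of_le one_pos (le_max_right _ _), fun t ht => ?_⟩
    exact hτ₀ t (le_trans (le_max_left _ _) ht)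
  · -- non-integrable case: the interval integral is zero
    have hall : ∀ᶠ t in atTop, g t ≤ 1 / t ^ lam := by
      filter_upwards [hbound, eventually_ge_atTop (1:ℝ)] with t hb ht1
      have ht0 : (0:ℝ) < t := by linarith
      have hT1 : (1:ℝ) ≤ t ^ (1 - lam) := Real.one_le_rpow ht1 h1l.le
      have hT0 : (0:ℝ) < t ^ (1 - lam) := by linarith
      have hnint : ¬ IntervalIntegrable
          (fun s => c * Real.exp (ν * (s - t ^ (1 - lam))) * s ^ (-k))
          volume 0 (t ^ (1 - lam)) := by
        intro h
        set T := t ^ (1 - lam)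
        rw [intervalIntegrable_iff_integrableOn_Ioc_of_le (by linarith)] at h
        have h' : IntegrableOn (fun s => c * Real.exp (ν * (s - T)) * s ^ (-k))
            (Ioo 0 T) volume := h.mono_set Ioo_subset_Ioc_self
        have hmono : IntegrableOn (fun s : ℝ => s ^ (-k)) (Ioo 0 T) volume := by
          apply Integrable.mono'
            (h'.const_mul (c * Real.exp (-(ν * T)))⁻¹)
            ((continuousOn_id.rpow_const fun x hx => Or.inl (ne_of_gt hx.1)).aestronglyMeasurable
              measurableSet_Ioo)
          rw [ae_restrict_iff' measurableSet_Ioo]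
          filter_upwards with s hs
          simp only [id_eq]
          rw [Real.norm_of_nonneg (Real.rpow_nonneg hs.1.le _)]
          have hse : Real.exp (-(ν * T)) ≤ Real.exp (ν * (s - T)) := by
            apply Real.exp_le_exp.2; nlinarith [hs.1.le]
          have hpos : (0:ℝ) < c * Real.exp (-(ν * T)) := by positivity
          calc s ^ (-k) = (c * Real.exp (-(ν * T)))⁻¹
                * (c * Real.exp (-(ν * T)) * s ^ (-k)) := by field_simp
            _ ≤ (c * Real.exp (-(ν * T)))⁻¹
                * (c * Real.exp (ν * (s - T)) * s ^ (-k)) := by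
                  have h2 : (0:ℝ) ≤ s ^ (-k) := Real.rpow_nonneg hs.1.le _
                  have := mul_le_mul_of_nonneg_right
                    (mul_le_mul_of_nonneg_left hse hc.le) h2
                  have hinv : (0:ℝ) ≤ (c * Real.exp (-(ν * T)))⁻¹ := by positivity
                  exact mul_le_mul_of_nonneg_left this hinv
        rw [integrableOn_Ioo_rpow_iff hT0] at hmono
        linarith
      have hzero := intervalIntegral.integral_undef hnint
      rw [hzero] at hb
      have := hg t (by linarith)
      have h1t : (0:ℝ) ≤ 1 / t ^ lam := by positivity
      linarith
    obtain ⟨τ₀, hτ₀⟩ := eventually_atTop.1 hall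
    refine ⟨1, one_pos, max τ₀ 1, lt_of_lt_of_le one_pos (le_max_right _ _), fun t ht => ?_⟩
    exact hτ₀ t (le_trans (le_max_left _ _) ht)
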